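/- Let S = {x ∈ ℓ¹ : x_0 = 0, ∑_{k=1}^∞ x_k = 0}. Then (^⊥S)^⊥ = {x ∈ ℓ¹ : x_0 = 0}, which strictly contains S. Moreover dist(y, S) = 2 > 1 = dist(y, (^⊥S)^⊥) for y = (1,1,0,0,…), illustrating the strict inequality inf_{x∈S}‖y−x‖ > min_{x∈(^⊥S)^⊥}‖y−x‖. -/

import Mathlib

section Helpers
open Filter

local notation "L1" => lp (fun _ : ℕ => ℝ) 1

lemma summable_abs' (x : lp (fun _ : ℕ => ℝ) 1) :
    Summable fun k => |(x : ℕ → ℝ) k| := by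
  simpa using (lp.memℓp x).summable (by norm_num)

lemma summable_self' (x : lp (fun _ : ℕ => ℝ) 1) :
    Summable fun k => (x : ℕ → ℝ) k :=
  Summable.of_norm (summable_abs' x)

lemma lp_norm_one (x : lp (fun _ : ℕ => ℝ) 1) : ‖x‖ = ∑' k, |(x : ℕ → ℝ) k| := by
  rw [lp.norm_eq_tsum_rpow (by norm_num) x]
  simp [Real.norm_eq_abs]

lemma summable_mul' (ν : lp (fun _ : ℕ => ℝ) ⊤) (x : lp (fun _ : ℕ => ℝ) 1) :
    Summable fun k => (ν : ℕ → ℝ) k * (x : ℕ → ℝ) k := by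
  apply Summable.of_norm
  apply Summable.of_nonneg_of_le (fun k => norm_nonneg _)
    (fun k => ?_) ((summable_abs' x).mul_left ‖ν‖)
  have h1 : ‖(ν : ℕ → ℝ) k‖ ≤ ‖ν‖ := lp.norm_apply_le_norm ENNReal.top_ne_zero ν k
  calc ‖(ν : ℕ → ℝ) k * (x : ℕ → ℝ) k‖ = ‖(ν : ℕ → ℝ) k‖ * |(x : ℕ → ℝ) k| := by
        rw [norm_mul]; rfl
    _ ≤ ‖ν‖ * |(x : ℕ → ℝ) k| := by
        exact mul_le_mul_of_nonneg_right h1 (abs_nonneg _)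

end Helpers

open Filter in
lemma preann_vanish (ν : lp (fun _ : ℕ => ℝ) ⊤)
    (htend : Filter.Tendsto (fun k => (ν : ℕ → ℝ) k) Filter.atTop (nhds 0))
    (hann : ∀ s ∈ {s : lp (fun _ : ℕ => ℝ) 1 | s 0 = 0 ∧ ∑' k : ℕ, s (k + 1) = 0},
      ∑' k : ℕ, (ν : ℕ → ℝ) k * s k = 0) :
    ∀ k, 1 ≤ k → (ν : ℕ → ℝ) k = 0 := by
  have step : ∀ j : ℕ, (ν : ℕ → ℝ) (j + 1) = (ν : ℕ → ℝ) (j + 2) := by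
    intro j
    set s : lp (fun _ : ℕ => ℝ) 1 :=
      lp.single 1 (j + 1) (1 : ℝ) - lp.single 1 (j + 2) (1 : ℝ) with hs
    have hsk : ∀ k : ℕ, (s : ℕ → ℝ) k =
        (if k = j + 1 then (1 : ℝ) else 0) - (if k = j + 2 then (1 : ℝ) else 0) := by
      intro k
      rw [hs]
      simp only [lp.coeFn_sub, Pi.sub_apply]
      congr 1
      · by_cases h : k = j + 1
        · subst h; simp [lp.single_apply_self]
        · simp [lp.single_apply_ne _ _ _ h, h]
      · by_cases h : k = j + 2
        · subst h; simp [lp.single_apply_self]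
        · simp [lp.single_apply_ne _ _ _ h, h]
    have hmem : s ∈ {s : lp (fun _ : ℕ => ℝ) 1 | s 0 = 0 ∧ ∑' k : ℕ, s (k + 1) = 0} := by
      constructor
      · rw [hsk 0]; simp
      · have h0 : ∀ k ∉ ({j, j + 1} : Finset ℕ), (s : ℕ → ℝ) (k + 1) = 0 := by
          intro k hk
          simp only [Finset.mem_insert, Finset.mem_singleton, not_or] at hk
          rw [hsk]
          have h1 : k + 1 ≠ j + 1 := by omega
          have h2 : k + 1 ≠ j + 2 := by omega
          simp [h1, h2, hk.1, hk.2]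
        rw [tsum_eq_sum h0, Finset.sum_pair (by omega : j ≠ j + 1), hsk, hsk]
        have h1 : j + 1 ≠ j + 2 := by omega
        have h2 : j + 1 + 1 = j + 2 := by omega
        simp [h1, h2]
    have := hann s hmem
    have h0 : ∀ k ∉ ({j + 1, j + 2} : Finset ℕ),
        (ν : ℕ → ℝ) k * (s : ℕ → ℝ) k = 0 := by
      intro k hk
      simp only [Finset.mem_insert, Finset.mem_singleton, not_or] at hk
      rw [hsk]
      simp [hk.1, hk.2]
    rw [tsum_eq_sum h0, Finset.sum_pair (by omega : j + 1 ≠ j + 2), hsk, hsk] at this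
    have h1 : j + 2 ≠ j + 1 := by omega
    have h2 : j + 1 ≠ j + 2 := by omega
    simp only [if_pos rfl, if_neg h1, if_neg h2] at this
    norm_num at this
    linarith
  have const : ∀ j : ℕ, (ν : ℕ → ℝ) (j + 1) = (ν : ℕ → ℝ) 1 := by
    intro j
    induction j with
    | zero => rfl
    | succ n ih => rw [← ih]; exact (step n).symm
  have hev : (fun k => (ν : ℕ → ℝ) k) =ᶠ[atTop] fun _ => (ν : ℕ → ℝ) 1 := by
    filter_upwards [eventually_ge_atTop 1] with k hk
    obtain ⟨j, rfl⟩ : ∃ j, k = j + 1 := ⟨k - 1, by omega⟩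
    exact const j
  have hν1 : (ν : ℕ → ℝ) 1 = 0 :=
    tendsto_nhds_unique tendsto_const_nhds (Filter.Tendsto.congr' hev htend)
  intro k hk
  obtain ⟨j, rfl⟩ : ∃ j, k = j + 1 := ⟨k - 1, by omega⟩
  rw [const j, hν1]

set_option maxHeartbeats 1000000 in
/-- For `S = {x ∈ ℓ¹ : x_0 = 0, ∑_{k≥1} x_k = 0}`, the annihilator of the
pre-annihilator of `S` is `{x ∈ ℓ¹ : x_0 = 0}`, which strictly contains `S`;
and with `y = (1,1,0,0,…)` we have `dist(y,S) = 2 > 1 = dist(y,(^⊥S)^⊥)`. -/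
theorem ann_of_preann_of_tail_sum_zero_subspace :
    {x : lp (fun _ : ℕ => ℝ) 1 |
        ∀ ν : lp (fun _ : ℕ => ℝ) ⊤,
          Filter.Tendsto (fun k => ν k) Filter.atTop (nhds 0) →
          (∀ s ∈ {s : lp (fun _ : ℕ => ℝ) 1 | s 0 = 0 ∧ ∑' k : ℕ, s (k + 1) = 0},
            ∑' k : ℕ, ν k * s k = 0) →
          ∑' k : ℕ, ν k * x k = 0}
      = {x : lp (fun _ : ℕ => ℝ) 1 | x 0 = 0}
    ∧ {x : lp (fun _ : ℕ => ℝ) 1 | x 0 = 0 ∧ ∑' k : ℕ, x (k + 1) = 0}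
        ⊂ {x : lp (fun _ : ℕ => ℝ) 1 | x 0 = 0}
    ∧ Metric.infDist ((lp.single 1 0 (1:ℝ) + lp.single 1 1 (1:ℝ)) : lp (fun _ : ℕ => ℝ) 1)
        {x : lp (fun _ : ℕ => ℝ) 1 | x 0 = 0 ∧ ∑' k : ℕ, x (k + 1) = 0} = 2
    ∧ Metric.infDist ((lp.single 1 0 (1:ℝ) + lp.single 1 1 (1:ℝ)) : lp (fun _ : ℕ => ℝ) 1)
        {x : lp (fun _ : ℕ => ℝ) 1 | x 0 = 0} = 1 := by
  set y : lp (fun _ : ℕ => ℝ) 1 := lp.single 1 0 (1:ℝ) + lp.single 1 1 (1:ℝ) with hy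
  have hyk : ∀ k : ℕ, (y : ℕ → ℝ) k =
      (if k = 0 then (1:ℝ) else 0) + (if k = 1 then (1:ℝ) else 0) := by
    intro k
    rw [hy]
    simp only [lp.coeFn_add, Pi.add_apply]
    congr 1
    · by_cases h : k = 0
      · subst h; simp [lp.single_apply_self]
      · simp [lp.single_apply_ne _ _ _ h, h]
    · by_cases h : k = 1
      · subst h; simp [lp.single_apply_self]
      · simp [lp.single_apply_ne _ _ _ h, h]
  have hy0 : (y : ℕ → ℝ) 0 = 1 := by rw [hyk]; norm_num
  have hy1 : (y : ℕ → ℝ) 1 = 1 := by rw [hyk]; norm_num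
  have hyk2 : ∀ k : ℕ, (y : ℕ → ℝ) (k + 2) = 0 := by
    intro k; rw [hyk, if_neg (by omega), if_neg (by omega)]; norm_num
  -- Part 1
  have part1 : {x : lp (fun _ : ℕ => ℝ) 1 |
        ∀ ν : lp (fun _ : ℕ => ℝ) ⊤,
          Filter.Tendsto (fun k => ν k) Filter.atTop (nhds 0) →
          (∀ s ∈ {s : lp (fun _ : ℕ => ℝ) 1 | s 0 = 0 ∧ ∑' k : ℕ, s (k + 1) = 0},
            ∑' k : ℕ, ν k * s k = 0) →
          ∑' k : ℕ, ν k * x k = 0}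
      = {x : lp (fun _ : ℕ => ℝ) 1 | x 0 = 0} := by
    ext x
    constructor
    · intro hx
      set ν : lp (fun _ : ℕ => ℝ) ⊤ := lp.single ⊤ 0 (1:ℝ) with hν
      have hνk : ∀ k : ℕ, k ≠ 0 → (ν : ℕ → ℝ) k = 0 := fun k hk =>
        lp.single_apply_ne _ _ _ hk
      have hν0 : (ν : ℕ → ℝ) 0 = 1 := lp.single_apply_self _ _ _
      have htend : Filter.Tendsto (fun k => (ν : ℕ → ℝ) k) Filter.atTop (nhds 0) := by
        have hev : (fun _ : ℕ => (0:ℝ)) =ᶠ[Filter.atTop] fun k => (ν : ℕ → ℝ) k := by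
          filter_upwards [Filter.eventually_ge_atTop 1] with k hk
          exact (hνk k (by omega)).symm
        exact Filter.Tendsto.congr' hev tendsto_const_nhds
      have hann : ∀ s ∈ {s : lp (fun _ : ℕ => ℝ) 1 | s 0 = 0 ∧ ∑' k : ℕ, s (k + 1) = 0},
          ∑' k : ℕ, (ν : ℕ → ℝ) k * s k = 0 := by
        intro s hs
        rw [tsum_eq_single 0 (fun k hk => by rw [hνk k hk]; ring)]
        rw [hν0, hs.1]; ring
      have := hx ν htend hann
      rwa [tsum_eq_single 0 (fun k hk => by rw [hνk k hk]; ring), hν0, one_mul] at this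
    · intro hx0 ν htend hann
      have hν := preann_vanish ν htend hann
      apply tsum_eq_single 0 (fun k hk => by rw [hν k (by omega)]; ring) |>.trans
      rw [hx0]; ring
  -- Part 2
  have e1mem : (lp.single 1 1 (1:ℝ) : lp (fun _ : ℕ => ℝ) 1) ∈
      {x : lp (fun _ : ℕ => ℝ) 1 | x 0 = 0} :=
    lp.single_apply_ne _ _ _ (by omega)
  have part2 : {x : lp (fun _ : ℕ => ℝ) 1 | x 0 = 0 ∧ ∑' k : ℕ, x (k + 1) = 0}
      ⊂ {x : lp (fun _ : ℕ => ℝ) 1 | x 0 = 0} := by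
    constructor
    · exact fun x hx => hx.1
    · intro hsub
      have h : ∑' k : ℕ, ((lp.single 1 1 (1:ℝ) : lp (fun _ : ℕ => ℝ) 1) : ℕ → ℝ) (k + 1)
          = 1 := by
        have hz : ∀ k : ℕ, k ≠ 0 →
            ((lp.single 1 1 (1:ℝ) : lp (fun _ : ℕ => ℝ) 1) : ℕ → ℝ) (k + 1) = 0 := by
          intro k hk
          exact lp.single_apply_ne _ _ _ (by omega)
        rw [tsum_eq_single 0 hz]
        exact lp.single_apply_self _ _ _
      exact one_ne_zero (h.symm.trans (hsub e1mem).2)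
  -- distance lower bound for S
  have hlow : ∀ x ∈ {x : lp (fun _ : ℕ => ℝ) 1 | x 0 = 0 ∧ ∑' k : ℕ, x (k + 1) = 0},
      2 ≤ dist y x := by
    rintro x ⟨hx0, hx1⟩
    rw [dist_eq_norm, lp_norm_one]
    have hco : ∀ k, ((y - x : lp (fun _ : ℕ => ℝ) 1) : ℕ → ℝ) k
        = (y : ℕ → ℝ) k - (x : ℕ → ℝ) k := by
      intro k; simp [lp.coeFn_sub]
    set g : ℕ → ℝ := fun k => |(y : ℕ → ℝ) k - (x : ℕ → ℝ) k| with hg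
    have hgs : Summable g := (summable_abs' (y - x)).congr (fun k => by rw [hco])
    have hrw : ∑' k, |((y - x : lp (fun _ : ℕ => ℝ) 1) : ℕ → ℝ) k| = ∑' k, g k :=
      tsum_congr fun k => by rw [hco]
    rw [hrw, Summable.tsum_eq_zero_add hgs, Summable.tsum_eq_zero_add ((summable_nat_add_iff 1).2 hgs)]
    have hg0 : g 0 = 1 := by rw [hg]; simp [hy0, hx0]
    have hg1 : g 1 = |1 - (x : ℕ → ℝ) 1| := by
      show |(y : ℕ → ℝ) 1 - (x : ℕ → ℝ) 1| = _
      rw [hy1]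
    have hgk : ∀ k : ℕ, g (k + 1 + 1) = |(x : ℕ → ℝ) (k + 2)| := by
      intro k; rw [hg]; simp [hyk2 k]
    have hsum2 : Summable fun k : ℕ => (x : ℕ → ℝ) (k + 2) :=
      (summable_nat_add_iff 2).2 (summable_self' x)
    have hx1' : (x : ℕ → ℝ) 1 + ∑' k, (x : ℕ → ℝ) (k + 2) = 0 := by
      have := Summable.tsum_eq_zero_add ((summable_nat_add_iff 1).2 (summable_self' x))
      rw [hx1] at this
      linarith [this]
    have habs : |(x : ℕ → ℝ) 1| ≤ ∑' k, g (k + 1 + 1) := by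
      have h1 : ∑' k, g (k + 1 + 1) = ∑' k, |(x : ℕ → ℝ) (k + 2)| :=
        tsum_congr fun k => hgk k
      have h2 : ‖∑' k, (x : ℕ → ℝ) (k + 2)‖ ≤ ∑' k, ‖(x : ℕ → ℝ) (k + 2)‖ :=
        norm_tsum_le_tsum_norm ((summable_nat_add_iff 2).2 (summable_abs' x))
      rw [h1]
      have h3 : ∑' k, (x : ℕ → ℝ) (k + 2) = -(x : ℕ → ℝ) 1 := by linarith
      rw [h3] at h2
      simpa [Real.norm_eq_abs, abs_neg] using h2
    have key : 1 ≤ |1 - (x : ℕ → ℝ) 1| + |(x : ℕ → ℝ) 1| := by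
      have := abs_add_le (1 - (x : ℕ → ℝ) 1) ((x : ℕ → ℝ) 1)
      simpa using this
    rw [hg0, hg1]
    linarith
  -- ‖y‖ = 2
  have hynorm : ‖y‖ = 2 := by
    rw [lp_norm_one]
    have h0 : ∀ k ∉ ({0, 1} : Finset ℕ), |(y : ℕ → ℝ) k| = 0 := by
      intro k hk
      simp only [Finset.mem_insert, Finset.mem_singleton, not_or] at hk
      rw [hyk]; simp [hk.1, hk.2]
    rw [tsum_eq_sum h0, Finset.sum_pair (by omega : (0:ℕ) ≠ 1), hy0, hy1]
    norm_num
  have h0mem : (0 : lp (fun _ : ℕ => ℝ) 1) ∈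
      {x : lp (fun _ : ℕ => ℝ) 1 | x 0 = 0 ∧ ∑' k : ℕ, x (k + 1) = 0} := by
    constructor
    · simp [lp.coeFn_zero]
    · simp [lp.coeFn_zero]
  have part3 : Metric.infDist y
      {x : lp (fun _ : ℕ => ℝ) 1 | x 0 = 0 ∧ ∑' k : ℕ, x (k + 1) = 0} = 2 := by
    apply le_antisymm
    · calc Metric.infDist y _ ≤ dist y 0 := Metric.infDist_le_dist_of_mem h0mem
        _ = ‖y‖ := by rw [dist_eq_norm, sub_zero]
        _ = 2 := hynorm
    · by_contra hcon
      obtain ⟨z, hz, hzlt⟩ := (Metric.infDist_lt_iff ⟨0, h0mem⟩).1 (lt_of_not_ge hcon)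
      exact absurd (hlow z hz) (by linarith)
  have part4 : Metric.infDist y {x : lp (fun _ : ℕ => ℝ) 1 | x 0 = 0} = 1 := by
    apply le_antisymm
    · calc Metric.infDist y _ ≤ dist y (lp.single 1 1 (1:ℝ)) :=
          Metric.infDist_le_dist_of_mem e1mem
        _ = ‖(lp.single 1 0 (1:ℝ) : lp (fun _ : ℕ => ℝ) 1)‖ := by
          rw [dist_eq_norm, hy, add_sub_cancel_right]
        _ = 1 := by
          have h := lp.norm_single (p := 1) (E := fun _ : ℕ => ℝ) (by norm_num)
            0 (1:ℝ)
          rw [h]; exact norm_one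
    · by_contra hcon
      obtain ⟨x, hx, hxlt⟩ := (Metric.infDist_lt_iff ⟨_, e1mem⟩).1 (lt_of_not_ge hcon)
      refine absurd ?_ (by linarith : ¬ (1:ℝ) ≤ dist y x)
      have h1 : ‖((y - x : lp (fun _ : ℕ => ℝ) 1) : ℕ → ℝ) 0‖ ≤ ‖y - x‖ :=
        lp.norm_apply_le_norm one_ne_zero (y - x) 0
      rw [dist_eq_norm]
      have hx' : (x : ℕ → ℝ) 0 = 0 := hx
      have h2 : ((y - x : lp (fun _ : ℕ => ℝ) 1) : ℕ → ℝ) 0 = 1 := by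
        simp only [lp.coeFn_sub, Pi.sub_apply, hy0, hx', sub_zero]
      rw [h2] at h1
      rwa [norm_one] at h1
  exact ⟨part1, part2, part3, part4⟩
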